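/- Let $T>0$, $H\in(\frac{1}{2},1)$, $\delta\in(0,\frac{1}{2})$ with $\delta<H$, $\epsilon>0$, $y\in\mathbb{R}$, $K_1,K_2,d_1,d_2\ge 0$. Let $b:\mathbb{R}\to\mathbb{R}$ be differentiable with $|b'|\le K_1$ and $|b'(u)-b'(v)|\le K_2|u-v|$; let $B:[0,T]\to\mathbb{R}$ be continuous with $B(0)=0$ and finite $(H-\delta)$-H\"older seminorm $\|B\|_{H-\delta}$; let $X:[0,T]\to\mathbb{R}$ satisfy $|X_t-X_s| \le d_1|t-s| + d_2\|B\|_\infty|t-s| + |B_t-B_s|$; set $X^\epsilon_t = X_t + \frac{T-t}{T}\epsilon y$ and $\eta_t = b(X_t)-b(X^\epsilon_t)-\frac{\epsilon}{T}y$. Define, for $s\in(0,T]$, $\Phi(s) = \frac{1}{\Gamma(\frac{3}{2}-H)}\Big(s^{\frac{1}{2}-H}\eta_s + (H-\tfrac{1}{2})s^{H-\frac{1}{2}}\int_0^s\frac{s^{\frac{1}{2}-H}-r^{\frac{1}{2}-H}}{(s-r)^{\frac{1}{2}+H}}\eta_r\,dr + (H-\tfrac{1}{2})\int_0^s\frac{\eta_s-\eta_r}{(s-r)^{\frac{1}{2}+H}}\,dr\Big)$.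 Then $|\Phi(s)| \le C_1\epsilon s^{\frac{1}{2}-H} + C_2\epsilon s^{\frac{3}{2}-H} + C_3\epsilon s^{\frac{3}{2}-H}\|B\|_\infty + C_4\epsilon s^{\frac{1}{2}-\delta}\|B\|_{H-\delta}$, where $C_0 = \int_0^1\frac{\theta^{\frac{1}{2}-H}-1}{(1-\theta)^{\frac{1}{2}+H}}d\theta$, $C_1=\frac{1}{\Gamma(\frac{3}{2}-H)}(1+C_0(H-\frac{1}{2}))(K_1+\frac{1}{T})|y|$, $C_2=\frac{1}{\Gamma(\frac{3}{2}-H)}\frac{H-\frac{1}{2}}{\frac{3}{2}-H}\frac{Td_1K_2+K_2|y|\epsilon+K_1}{T}|y|$, $C_3=\frac{1}{\Gamma(\frac{3}{2}-H)}\frac{H-\frac{1}{2}}{\frac{3}{2}-H}d_2K_2|y|$, $C_4=\frac{1}{\Gamma(\frac{3}{2}-H)}\frac{H-\frac{1}{2}}{\frac{1}{2}-\delta}K_2|y|$. -/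

import Mathlib

open MeasureTheory Set intervalIntegral
open scoped Interval

set_option maxHeartbeats 1000000

/-- The sup norm `‖f‖_∞ = sup_{0 ≤ t ≤ T} |f t|` of a path on `[0,T]`. -/
noncomputable def supN {E : Type*} [NormedAddCommGroup E] (T : ℝ) (f : ℝ → E) : ℝ :=
  ⨆ t : Icc (0:ℝ) T, ‖f (t : ℝ)‖

/-- The `λ`-Hölder seminorm `‖f‖_λ = sup_{0 ≤ s < t ≤ T} |f t - f s| / (t-s)^λ` of a path on
`[0,T]` (the diagonal pairs contribute `0/0 = 0`, so the supremum is unchanged). -/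
noncomputable def holderN {E : Type*} [NormedAddCommGroup E] (T lam : ℝ) (f : ℝ → E) : ℝ :=
  ⨆ p : Icc (0:ℝ) T × Icc (0:ℝ) T, ‖f (p.2 : ℝ) - f (p.1 : ℝ)‖ / |(p.2 : ℝ) - (p.1 : ℝ)| ^ lam

private lemma lip_of_deriv_bound {f : ℝ → ℝ} (hf : Differentiable ℝ f) {C : ℝ}
    (hC : ∀ x, |deriv f x| ≤ C) (x y : ℝ) : |f x - f y| ≤ C * |x - y| := by
  have := Convex.norm_image_sub_le_of_norm_deriv_le (f := f) (s := univ)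
    (fun z _ => hf z) (fun z _ => hC z) convex_univ (mem_univ y) (mem_univ x)
  simpa [Real.norm_eq_abs] using this

private lemma incr_bound {b : ℝ → ℝ} (hb : Differentiable ℝ b) {K₂ : ℝ}
    (hb2 : ∀ u v, |deriv b u - deriv b v| ≤ K₂ * |u - v|) (h x y : ℝ) :
    |(b (x + h) - b x) - (b (y + h) - b y)| ≤ K₂ * |h| * |x - y| := by
  have hgd : Differentiable ℝ (fun z => b (z + h) - b z) := fun z =>
    (((hb (z + h)).hasDerivAt.comp_add_const z h).sub (hb z).hasDerivAt).differentiableAt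
  have hC : ∀ z, |deriv (fun z => b (z + h) - b z) z| ≤ K₂ * |h| := by
    intro z
    have h1 : HasDerivAt (fun z => b (z + h) - b z) (deriv b (z + h) - deriv b z) z :=
      ((hb (z + h)).hasDerivAt.comp_add_const z h).sub (hb z).hasDerivAt
    rw [h1.deriv]
    calc |deriv b (z + h) - deriv b z| ≤ K₂ * |z + h - z| := hb2 _ _
      _ = K₂ * |h| := by rw [add_sub_cancel_left]
  exact lip_of_deriv_bound hgd hC x y

/-- Pointwise bound `|Φ(s)| ≤ C₁ ε s^{1/2-H} + C₂ ε s^{3/2-H} + C₃ ε s^{3/2-H} ‖B‖_∞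
+ C₄ ε s^{1/2-δ} ‖B‖_{H-δ}` for the Girsanov drift
`Φ(s) = (K_H^{-1} ∫_0^· η_r dr)(s)` in the proof of the Bismut derivative formula, `H > 1/2`. -/
theorem stmt_8 (T H δ ε y K₁ K₂ d₁ d₂ C₀ C₁ C₂ C₃ C₄ : ℝ)
    (hT : 0 < T) (hH : H ∈ Ioo (1/2 : ℝ) 1) (hδ : δ ∈ Ioo (0:ℝ) (1/2)) (hδH : δ < H)
    (hε : 0 < ε) (hK₁ : 0 ≤ K₁) (hK₂ : 0 ≤ K₂) (hd₁ : 0 ≤ d₁) (hd₂ : 0 ≤ d₂)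
    (b : ℝ → ℝ) (hb : Differentiable ℝ b)
    (hb1 : ∀ u, |deriv b u| ≤ K₁) (hb2 : ∀ u v, |deriv b u - deriv b v| ≤ K₂ * |u - v|)
    (B : ℝ → ℝ) (hBc : ContinuousOn B (Icc 0 T)) (hB0 : B 0 = 0)
    (hBβ : BddAbove (Set.range fun p : Icc (0:ℝ) T × Icc (0:ℝ) T =>
      |B (p.2 : ℝ) - B (p.1 : ℝ)| / |(p.2 : ℝ) - (p.1 : ℝ)| ^ (H - δ)))
    (X : ℝ → ℝ)
    (hX : ∀ s ∈ Icc (0:ℝ) T, ∀ t ∈ Icc (0:ℝ) T,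
      |X t - X s| ≤ d₁ * |t - s| + d₂ * supN T B * |t - s| + |B t - B s|)
    (Xε η Φ : ℝ → ℝ)
    (hXε : ∀ t, Xε t = X t + ((T - t) / T) * ε * y)
    (hη : ∀ t, η t = b (X t) - b (Xε t) - (ε / T) * y)
    (hΦ : ∀ s ∈ Ioc (0:ℝ) T,
      Φ s = (1 / Real.Gamma (3/2 - H)) *
        (s ^ ((1:ℝ)/2 - H) * η s
          + (H - 1/2) * s ^ (H - (1:ℝ)/2) *
            (∫ r in (0:ℝ)..s,
              (s ^ ((1:ℝ)/2 - H) - r ^ ((1:ℝ)/2 - H)) / (s - r) ^ ((1:ℝ)/2 + H) * η r)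
          + (H - 1/2) * ∫ r in (0:ℝ)..s, (η s - η r) / (s - r) ^ ((1:ℝ)/2 + H)))
    (hC₀ : C₀ = ∫ θ in (0:ℝ)..1, (θ ^ ((1:ℝ)/2 - H) - 1) / (1 - θ) ^ ((1:ℝ)/2 + H))
    (hC₁ : C₁ = (1 / Real.Gamma (3/2 - H)) * (1 + C₀ * (H - 1/2)) * (K₁ + 1 / T) * |y|)
    (hC₂ : C₂ = (1 / Real.Gamma (3/2 - H)) * ((H - 1/2) / (3/2 - H)) *
      ((T * d₁ * K₂ + K₂ * |y| * ε + K₁) / T) * |y|)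
    (hC₃ : C₃ = (1 / Real.Gamma (3/2 - H)) * ((H - 1/2) / (3/2 - H)) * d₂ * K₂ * |y|)
    (hC₄ : C₄ = (1 / Real.Gamma (3/2 - H)) * ((H - 1/2) / (1/2 - δ)) * K₂ * |y|) :
    ∀ s ∈ Ioc (0:ℝ) T,
      |Φ s| ≤ C₁ * ε * s ^ ((1:ℝ)/2 - H) + C₂ * ε * s ^ ((3:ℝ)/2 - H)
        + C₃ * ε * s ^ ((3:ℝ)/2 - H) * supN T B
        + C₄ * ε * s ^ ((1:ℝ)/2 - δ) * holderN T (H - δ) B := by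
  obtain ⟨hH1, hH2⟩ := hH
  obtain ⟨hδ1, hδ2⟩ := hδ
  have hΓ : 0 < Real.Gamma (3/2 - H) := Real.Gamma_pos_of_pos (by linarith)
  set W := supN T B with hWdef
  set N := holderN T (H - δ) B with hNdef
  have hWnn : 0 ≤ W := Real.iSup_nonneg fun t => norm_nonneg _
  have hNnn : 0 ≤ N := Real.iSup_nonneg fun p =>
    div_nonneg (norm_nonneg _) (Real.rpow_nonneg (abs_nonneg _) _)
  -- Hölder bound for B
  have hhol : ∀ r ∈ Icc (0:ℝ) T, ∀ t ∈ Icc (0:ℝ) T,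
      |B t - B r| ≤ N * |t - r| ^ (H - δ) := by
    intro r hr t ht
    rcases eq_or_ne t r with h | h
    · subst h
      simp [Real.zero_rpow (show H - δ ≠ 0 by linarith)]
    · have hpos : 0 < |t - r| ^ (H - δ) :=
        Real.rpow_pos_of_pos (abs_pos.2 (sub_ne_zero.2 h)) _
      rw [← div_le_iff₀ hpos]
      have h2 := le_ciSup hBβ (⟨⟨r, hr⟩, ⟨t, ht⟩⟩ : Icc (0:ℝ) T × Icc (0:ℝ) T)
      simpa [hNdef, holderN, Real.norm_eq_abs] using h2
  -- bound on the perturbation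
  have hc_abs : ∀ t ∈ Icc (0:ℝ) T, |(T - t) / T * ε * y| ≤ ε * |y| := by
    intro t ht
    have h1 : 0 ≤ (T - t) / T := div_nonneg (by linarith [ht.2]) hT.le
    have h2 : (T - t) / T ≤ 1 := by
      rw [div_le_one hT]; linarith [ht.1]
    rw [abs_mul, abs_mul, abs_of_nonneg h1, abs_of_pos hε]
    calc (T - t) / T * ε * |y| ≤ 1 * ε * |y| := by
          apply mul_le_mul_of_nonneg_right _ (abs_nonneg _)
          exact mul_le_mul_of_nonneg_right h2 hε.le
      _ = ε * |y| := by ring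
  have hbK : ∀ u v : ℝ, |b u - b v| ≤ K₁ * |u - v| := lip_of_deriv_bound hb hb1
  -- increment bound for η
  have hηd : ∀ t ∈ Icc (0:ℝ) T, ∀ r ∈ Icc (0:ℝ) T,
      |η t - η r| ≤ (K₁ * (ε * |y|) / T + K₂ * (ε * |y|) * (d₁ + d₂ * W)) * |t - r|
        + K₂ * (ε * |y|) * |B t - B r| := by
    intro t ht r hr
    have e : η t - η r = (b (X t + (T - r) / T * ε * y) - b (X t + (T - t) / T * ε * y))
        - ((b (X t + (T - r) / T * ε * y) - b (X t))
            - (b (X r + (T - r) / T * ε * y) - b (X r))) := by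
      rw [hη t, hη r, hXε t, hXε r]; ring
    have h1 : |b (X t + (T - r) / T * ε * y) - b (X t + (T - t) / T * ε * y)|
        ≤ K₁ * (ε * |y|) / T * |t - r| := by
      have h0 := hbK (X t + (T - r) / T * ε * y) (X t + (T - t) / T * ε * y)
      have e2 : X t + (T - r) / T * ε * y - (X t + (T - t) / T * ε * y)
          = (t - r) / T * ε * y := by ring
      rw [e2] at h0
      refine h0.trans_eq ?_
      rw [abs_mul, abs_mul, abs_div, abs_of_pos hT, abs_of_pos hε]
      ring
    have h2 := incr_bound hb hb2 ((T - r) / T * ε * y) (X t) (X r)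
    have h2' : K₂ * |(T - r) / T * ε * y| * |X t - X r|
        ≤ K₂ * (ε * |y|) * (d₁ * |t - r| + d₂ * W * |t - r| + |B t - B r|) := by
      apply mul_le_mul
      · exact mul_le_mul_of_nonneg_left (hc_abs r hr) hK₂
      · exact hX r hr t ht
      · exact abs_nonneg _
      · positivity
    calc |η t - η r|
        ≤ |b (X t + (T - r) / T * ε * y) - b (X t + (T - t) / T * ε * y)|
          + |(b (X t + (T - r) / T * ε * y) - b (X t))
              - (b (X r + (T - r) / T * ε * y) - b (X r))| := by
          rw [e]; exact abs_sub _ _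
      _ ≤ (K₁ * (ε * |y|) / T + K₂ * (ε * |y|) * (d₁ + d₂ * W)) * |t - r|
          + K₂ * (ε * |y|) * |B t - B r| := by
          have := h2.trans h2'
          linarith [h1]
  -- sup bound for η
  have hηb : ∀ t ∈ Icc (0:ℝ) T, |η t| ≤ (K₁ + 1 / T) * (ε * |y|) := by
    intro t ht
    rw [hη t, hXε t]
    have h1 : |b (X t) - b (X t + (T - t) / T * ε * y)| ≤ K₁ * (ε * |y|) := by
      refine (hbK _ _).trans ?_
      have e2 : X t - (X t + (T - t) / T * ε * y) = -((T - t) / T * ε * y) := by ring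
      rw [e2, abs_neg]
      exact mul_le_mul_of_nonneg_left (hc_abs t ht) hK₁
    have h2 : |ε / T * y| = ε * |y| / T := by
      rw [abs_mul, abs_div, abs_of_pos hε, abs_of_pos hT]; ring
    calc |b (X t) - b (X t + (T - t) / T * ε * y) - ε / T * y|
        ≤ |b (X t) - b (X t + (T - t) / T * ε * y)| + |ε / T * y| := abs_sub _ _
      _ ≤ K₁ * (ε * |y|) + ε * |y| / T := by rw [h2]; linarith
      _ = (K₁ + 1 / T) * (ε * |y|) := by ring
  set M := (K₁ + 1 / T) * (ε * |y|) with hMdef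
  have hMnn : 0 ≤ M := by
    have : (0:ℝ) ≤ 1 / T := by positivity
    have : (0:ℝ) ≤ ε * |y| := by positivity
    rw [hMdef]; positivity
  -- integrability of the C₀ integrand
  have hψmeas : Measurable (fun θ : ℝ => (θ ^ ((1:ℝ)/2 - H) - 1) / (1 - θ) ^ ((1:ℝ)/2 + H)) := by
    fun_prop
  have hpart1 : IntervalIntegrable
      (fun θ : ℝ => (θ ^ ((1:ℝ)/2 - H) - 1) / (1 - θ) ^ ((1:ℝ)/2 + H)) volume 0 (1/2) := by
    have hint1 : IntervalIntegrable (fun θ : ℝ => (2:ℝ) ^ ((1:ℝ)/2 + H) * θ ^ ((1:ℝ)/2 - H))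
        volume 0 (1/2) :=
      (intervalIntegrable_rpow' (by linarith)).const_mul _
    refine hint1.mono_fun hψmeas.aestronglyMeasurable ?_
    filter_upwards [ae_restrict_mem measurableSet_uIoc] with θ hθ
    rw [uIoc_of_le (by norm_num : (0:ℝ) ≤ 1/2)] at hθ
    have hθ0 : 0 < θ := hθ.1
    have hθ1 : θ ≤ 1/2 := hθ.2
    have h1 : (1:ℝ) ≤ θ ^ ((1:ℝ)/2 - H) :=
      Real.one_le_rpow_of_pos_of_le_one_of_nonpos hθ0 (by linarith) (by linarith)
    have h2 : ((1:ℝ)/2) ^ ((1:ℝ)/2 + H) ≤ (1 - θ) ^ ((1:ℝ)/2 + H) :=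
      Real.rpow_le_rpow (by norm_num) (by linarith) (by linarith)
    have h2' : (0:ℝ) < ((1:ℝ)/2) ^ ((1:ℝ)/2 + H) := Real.rpow_pos_of_pos (by norm_num) _
    rw [Real.norm_eq_abs, Real.norm_eq_abs,
      abs_of_nonneg (div_nonneg (by linarith) (Real.rpow_nonneg (by linarith) _)),
      abs_of_nonneg (mul_nonneg (Real.rpow_nonneg (by norm_num) _)
        (Real.rpow_nonneg hθ0.le _))]
    calc (θ ^ ((1:ℝ)/2 - H) - 1) / (1 - θ) ^ ((1:ℝ)/2 + H)
        ≤ θ ^ ((1:ℝ)/2 - H) / ((1/2:ℝ) ^ ((1:ℝ)/2 + H)) :=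
          div_le_div₀ (Real.rpow_nonneg hθ0.le _) (by linarith) h2' h2
      _ = (2:ℝ) ^ ((1:ℝ)/2 + H) * θ ^ ((1:ℝ)/2 - H) := by
          rw [div_eq_mul_inv, ← Real.inv_rpow (by norm_num : (0:ℝ) ≤ 1/2)]
          norm_num [mul_comm]
  have hpart2 : IntervalIntegrable
      (fun θ : ℝ => (θ ^ ((1:ℝ)/2 - H) - 1) / (1 - θ) ^ ((1:ℝ)/2 + H)) volume (1/2) 1 := by
    have hint2 : IntervalIntegrable (fun θ : ℝ => (1 - θ) ^ ((1:ℝ)/2 - H)) volume (1/2) 1 := by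
      have h := (intervalIntegrable_rpow'
        (show (-1:ℝ) < (1:ℝ)/2 - H by linarith) (a := (1/2:ℝ)) (b := 0)).comp_sub_left 1
      simpa [(by norm_num : (1:ℝ) - 2⁻¹ = 2⁻¹)] using h
    refine (hint2.const_mul ((2:ℝ) ^ (H - (1:ℝ)/2))).mono_fun hψmeas.aestronglyMeasurable ?_
    filter_upwards [ae_restrict_mem measurableSet_uIoc] with θ hθ
    rw [uIoc_of_le (by norm_num : (1/2:ℝ) ≤ 1)] at hθ
    have hθh : 1/2 < θ := hθ.1
    have hθ0 : (0:ℝ) < θ := by linarith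
    have hθ1 : θ ≤ 1 := hθ.2
    have hnum0 : 0 ≤ θ ^ ((1:ℝ)/2 - H) - 1 := by
      have h0 : (1:ℝ) ≤ θ ^ ((1:ℝ)/2 - H) :=
        Real.one_le_rpow_of_pos_of_le_one_of_nonpos hθ0 hθ1 (by linarith)
      linarith
    have hkey : θ ^ ((1:ℝ)/2 - H) - 1 ≤ (2:ℝ) ^ (H - (1:ℝ)/2) * (1 - θ) := by
      have h1 : θ ≤ θ ^ (H - (1:ℝ)/2) := by
        have := Real.rpow_le_rpow_of_exponent_ge hθ0 hθ1 (show H - (1:ℝ)/2 ≤ 1 by linarith)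
        simpa [Real.rpow_one] using this
      have h2 : θ ^ ((1:ℝ)/2 - H) ≤ (2:ℝ) ^ (H - (1:ℝ)/2) := by
        have h2a := Real.rpow_le_rpow_of_nonpos (by norm_num : (0:ℝ) < 1/2) hθh.le
          (show (1:ℝ)/2 - H ≤ 0 by linarith)
        have e : ((1/2:ℝ)) ^ ((1:ℝ)/2 - H) = (2:ℝ) ^ (H - (1:ℝ)/2) := by
          rw [show (1/2:ℝ) = 2⁻¹ by norm_num, Real.inv_rpow (by norm_num),
            ← Real.rpow_neg (by norm_num)]
          norm_num
        rw [e] at h2a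
        exact h2a
      have h3 : θ ^ ((1:ℝ)/2 - H) * θ ^ (H - (1:ℝ)/2) = 1 := by
        rw [← Real.rpow_add hθ0]
        norm_num
      have hu0 : 0 ≤ θ ^ ((1:ℝ)/2 - H) := Real.rpow_nonneg hθ0.le _
      have e1 : θ ^ ((1:ℝ)/2 - H) * (1 - θ ^ (H - (1:ℝ)/2)) = θ ^ ((1:ℝ)/2 - H) - 1 := by
        rw [mul_sub, h3, mul_one]
      have e2 : θ ^ ((1:ℝ)/2 - H) * (1 - θ ^ (H - (1:ℝ)/2)) ≤ θ ^ ((1:ℝ)/2 - H) * (1 - θ) :=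
        mul_le_mul_of_nonneg_left (by linarith) hu0
      have e3 : θ ^ ((1:ℝ)/2 - H) * (1 - θ) ≤ (2:ℝ) ^ (H - (1:ℝ)/2) * (1 - θ) :=
        mul_le_mul_of_nonneg_right h2 (by linarith)
      linarith
    rw [Real.norm_eq_abs, Real.norm_eq_abs,
      abs_of_nonneg (div_nonneg hnum0 (Real.rpow_nonneg (by linarith) _)),
      abs_of_nonneg (mul_nonneg (Real.rpow_nonneg (by norm_num) _)
        (Real.rpow_nonneg (by linarith) _))]
    rcases eq_or_lt_of_le hθ1 with h1' | h1'
    · subst h1'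
      simp only [Real.one_rpow, sub_self, zero_div]
      positivity
    · have hd : 0 < 1 - θ := by linarith
      rw [div_le_iff₀ (Real.rpow_pos_of_pos hd _)]
      calc θ ^ ((1:ℝ)/2 - H) - 1 ≤ (2:ℝ) ^ (H - (1:ℝ)/2) * (1 - θ) := hkey
        _ = (2:ℝ) ^ (H - (1:ℝ)/2) * (1 - θ) ^ ((1:ℝ)/2 - H) * (1 - θ) ^ ((1:ℝ)/2 + H) := by
            rw [mul_assoc, ← Real.rpow_add hd]
            norm_num
  have hψint : IntervalIntegrable
      (fun θ : ℝ => (θ ^ ((1:ℝ)/2 - H) - 1) / (1 - θ) ^ ((1:ℝ)/2 + H)) volume 0 1 :=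
    hpart1.trans hpart2
  have hC₀nn : 0 ≤ C₀ := by
    rw [hC₀, intervalIntegral.integral_of_le (by norm_num : (0:ℝ) ≤ 1)]
    apply setIntegral_nonneg measurableSet_Ioc
    intro θ hθ
    have h1 : (1:ℝ) ≤ θ ^ ((1:ℝ)/2 - H) :=
      Real.one_le_rpow_of_pos_of_le_one_of_nonpos hθ.1 hθ.2 (by linarith)
    exact div_nonneg (by linarith) (Real.rpow_nonneg (by linarith [hθ.2]) _)
  -- now fix s
  intro s hs
  obtain ⟨hs0, hsT⟩ := hs
  have hsmem : s ∈ Icc (0:ℝ) T := ⟨hs0.le, hsT⟩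
  set G : ℝ → ℝ :=
    fun r => (r ^ ((1:ℝ)/2 - H) - s ^ ((1:ℝ)/2 - H)) / (s - r) ^ ((1:ℝ)/2 + H) with hGdef
  have hGscale : ∀ θ ∈ Icc (0:ℝ) 1,
      G (s * θ) = s ^ (-(2*H)) * ((θ ^ ((1:ℝ)/2 - H) - 1) / (1 - θ) ^ ((1:ℝ)/2 + H)) := by
    intro θ hθ
    simp only [hGdef]
    have e1 : (s * θ) ^ ((1:ℝ)/2 - H) = s ^ ((1:ℝ)/2 - H) * θ ^ ((1:ℝ)/2 - H) :=
      Real.mul_rpow hs0.le hθ.1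
    have e2 : (s - s * θ) ^ ((1:ℝ)/2 + H) = s ^ ((1:ℝ)/2 + H) * (1 - θ) ^ ((1:ℝ)/2 + H) := by
      rw [show s - s * θ = s * (1 - θ) by ring, Real.mul_rpow hs0.le (by linarith [hθ.2])]
    rw [e1, e2, show s ^ ((1:ℝ)/2 - H) * θ ^ ((1:ℝ)/2 - H) - s ^ ((1:ℝ)/2 - H)
        = s ^ ((1:ℝ)/2 - H) * (θ ^ ((1:ℝ)/2 - H) - 1) by ring, mul_div_mul_comm]
    congr 1
    rw [← Real.rpow_sub hs0]
    congr 1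
    ring
  have hGcomp : IntervalIntegrable (fun θ : ℝ => G (s * θ)) volume 0 1 := by
    have hψint' : IntervalIntegrable (fun θ : ℝ =>
        s ^ (-(2*H)) * ((θ ^ ((1:ℝ)/2 - H) - 1) / (1 - θ) ^ ((1:ℝ)/2 + H))) volume 0 1 :=
      hψint.const_mul _
    rw [intervalIntegrable_iff, uIoc_of_le (by norm_num : (0:ℝ) ≤ 1)] at hψint' ⊢
    exact hψint'.congr_fun
      (fun θ hθ => (hGscale θ (Ioc_subset_Icc_self hθ)).symm) measurableSet_Ioc
  have hGint : IntervalIntegrable G volume 0 s := by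
    have h := hGcomp.comp_mul_left (c := s⁻¹)
    simp only [mul_inv_cancel_left₀ hs0.ne'] at h
    simpa [hs0.ne'] using h
  have hGval : ∫ r in (0:ℝ)..s, G r = s * (s ^ (-(2*H)) * C₀) := by
    have h1 : ∫ θ in (0:ℝ)..1, G (s * θ) = s⁻¹ • ∫ r in (s*0)..(s*1), G r :=
      intervalIntegral.integral_comp_mul_left G hs0.ne'
    rw [mul_zero, mul_one] at h1
    have h2 : ∫ θ in (0:ℝ)..1, G (s * θ)
        = ∫ θ in (0:ℝ)..1,
            s ^ (-(2*H)) * ((θ ^ ((1:ℝ)/2 - H) - 1) / (1 - θ) ^ ((1:ℝ)/2 + H)) :=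
      intervalIntegral.integral_congr (fun θ hθ => by
        rw [uIcc_of_le (by norm_num : (0:ℝ) ≤ 1)] at hθ
        exact hGscale θ hθ)
    rw [h2, intervalIntegral.integral_const_mul, ← hC₀, smul_eq_mul] at h1
    rw [h1, mul_inv_cancel_left₀ hs0.ne']
  -- bound on the middle integral
  have hI₁ : |∫ r in (0:ℝ)..s,
      (s ^ ((1:ℝ)/2 - H) - r ^ ((1:ℝ)/2 - H)) / (s - r) ^ ((1:ℝ)/2 + H) * η r|
      ≤ M * (s * (s ^ (-(2*H)) * C₀)) := by
    have hb' : ∀ᵐ r ∂(volume.restrict (Ι 0 s)),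
        ‖(s ^ ((1:ℝ)/2 - H) - r ^ ((1:ℝ)/2 - H)) / (s - r) ^ ((1:ℝ)/2 + H) * η r‖
          ≤ M * G r := by
      filter_upwards [ae_restrict_mem measurableSet_uIoc] with r hr
      rw [uIoc_of_le hs0.le] at hr
      have hr0 : 0 < r := hr.1
      have hrs : r ≤ s := hr.2
      have hfa : s ^ ((1:ℝ)/2 - H) ≤ r ^ ((1:ℝ)/2 - H) :=
        Real.rpow_le_rpow_of_nonpos hr0 hrs (by linarith)
      have hGr : |(s ^ ((1:ℝ)/2 - H) - r ^ ((1:ℝ)/2 - H)) / (s - r) ^ ((1:ℝ)/2 + H)| = G r := by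
        simp only [hGdef]
        rw [abs_div, abs_of_nonneg (Real.rpow_nonneg (by linarith) ((1:ℝ)/2 + H)),
          abs_of_nonpos (by linarith), neg_sub]
      have hGrnn : 0 ≤ G r := by
        simp only [hGdef]
        exact div_nonneg (by linarith) (Real.rpow_nonneg (by linarith) _)
      rw [Real.norm_eq_abs, abs_mul, hGr]
      calc G r * |η r| ≤ G r * M :=
            mul_le_mul_of_nonneg_left (hηb r ⟨hr0.le, hrs.trans hsT⟩) hGrnn
        _ = M * G r := mul_comm _ _
    have h := intervalIntegral.norm_integral_le_abs_of_norm_le hb' (hGint.const_mul M)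
    rw [intervalIntegral.integral_const_mul, hGval, Real.norm_eq_abs] at h
    rwa [abs_of_nonneg (mul_nonneg hMnn (mul_nonneg hs0.le
      (mul_nonneg (Real.rpow_nonneg hs0.le _) hC₀nn)))] at h
  -- bound on the third integral
  set A₀ := K₁ * (ε * |y|) / T + K₂ * (ε * |y|) * (d₁ + d₂ * W) with hA₀def
  set cN := K₂ * (ε * |y|) * N with hcNdef
  have hA₀nn : 0 ≤ A₀ := by
    rw [hA₀def]
    have h1 : (0:ℝ) ≤ K₁ * (ε * |y|) / T := by positivity
    have h2 : (0:ℝ) ≤ K₂ * (ε * |y|) * (d₁ + d₂ * W) := by positivity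
    linarith
  have hcNnn : 0 ≤ cN := by rw [hcNdef]; positivity
  have i1 : IntervalIntegrable (fun r : ℝ => (s - r) ^ ((1:ℝ)/2 - H)) volume 0 s := by
    have h := (intervalIntegrable_rpow'
      (show (-1:ℝ) < (1:ℝ)/2 - H by linarith) (a := s) (b := 0)).comp_sub_left s
    simpa using h
  have i2 : IntervalIntegrable (fun r : ℝ => (s - r) ^ (-(1:ℝ)/2 - δ)) volume 0 s := by
    have h := (intervalIntegrable_rpow'
      (show (-1:ℝ) < -(1:ℝ)/2 - δ by linarith) (a := s) (b := 0)).comp_sub_left s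
    simpa using h
  have e1 : ∫ r in (0:ℝ)..s, (s - r) ^ ((1:ℝ)/2 - H) = s ^ ((3:ℝ)/2 - H) / (3/2 - H) := by
    have h := intervalIntegral.integral_comp_sub_left (a := (0:ℝ)) (b := s)
      (fun x : ℝ => x ^ ((1:ℝ)/2 - H)) s
    simp only [sub_self, sub_zero] at h
    rw [h, integral_rpow (Or.inl (by linarith : (-1:ℝ) < (1:ℝ)/2 - H)),
      Real.zero_rpow (show (1:ℝ)/2 - H + 1 ≠ 0 by intro hc; linarith),
      show (1:ℝ)/2 - H + 1 = 3/2 - H by ring]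
    ring
  have e2 : ∫ r in (0:ℝ)..s, (s - r) ^ (-(1:ℝ)/2 - δ) = s ^ ((1:ℝ)/2 - δ) / (1/2 - δ) := by
    have h := intervalIntegral.integral_comp_sub_left (a := (0:ℝ)) (b := s)
      (fun x : ℝ => x ^ (-(1:ℝ)/2 - δ)) s
    simp only [sub_self, sub_zero] at h
    rw [h, integral_rpow (Or.inl (by linarith : (-1:ℝ) < -(1:ℝ)/2 - δ)),
      Real.zero_rpow (show -(1:ℝ)/2 - δ + 1 ≠ 0 by intro hc; linarith),
      show -(1:ℝ)/2 - δ + 1 = 1/2 - δ by ring]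
    ring
  have hJ : |∫ r in (0:ℝ)..s, (η s - η r) / (s - r) ^ ((1:ℝ)/2 + H)|
      ≤ A₀ * (s ^ ((3:ℝ)/2 - H) / (3/2 - H)) + cN * (s ^ ((1:ℝ)/2 - δ) / (1/2 - δ)) := by
    have hDgint : IntervalIntegrable
        (fun r : ℝ => A₀ * (s - r) ^ ((1:ℝ)/2 - H) + cN * (s - r) ^ (-(1:ℝ)/2 - δ))
        volume 0 s := (i1.const_mul A₀).add (i2.const_mul cN)
    have hbound : ∀ᵐ r ∂(volume.restrict (Ι 0 s)),
        ‖(η s - η r) / (s - r) ^ ((1:ℝ)/2 + H)‖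
          ≤ A₀ * (s - r) ^ ((1:ℝ)/2 - H) + cN * (s - r) ^ (-(1:ℝ)/2 - δ) := by
      filter_upwards [ae_restrict_mem measurableSet_uIoc] with r hr
      rw [uIoc_of_le hs0.le] at hr
      rcases eq_or_lt_of_le hr.2 with hrs | hrs
      · rw [hrs]
        simp only [sub_self, zero_div, norm_zero,
          Real.zero_rpow (show (1:ℝ)/2 - H ≠ 0 by intro hc; linarith),
          Real.zero_rpow (show -(1:ℝ)/2 - δ ≠ 0 by intro hc; linarith), mul_zero, add_zero]
        exact le_rfl
      · have hsr : 0 < s - r := by linarith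
        have hrm : r ∈ Icc (0:ℝ) T := ⟨hr.1.le, (hr.2.trans hsT)⟩
        have hηd' := hηd s hsmem r hrm
        have hBd := hhol r hrm s hsmem
        have habs : |s - r| = s - r := abs_of_pos hsr
        have h1 : |η s - η r| ≤ A₀ * (s - r) + cN * (s - r) ^ (H - δ) := by
          have h2 : K₂ * (ε * |y|) * |B s - B r| ≤ cN * (s - r) ^ (H - δ) := by
            calc K₂ * (ε * |y|) * |B s - B r|
                ≤ K₂ * (ε * |y|) * (N * |s - r| ^ (H - δ)) :=
                  mul_le_mul_of_nonneg_left hBd (by positivity)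
              _ = cN * (s - r) ^ (H - δ) := by rw [habs, hcNdef]; ring
          have h3 : A₀ * |s - r| = A₀ * (s - r) := by rw [habs]
          linarith [hηd']
        rw [Real.norm_eq_abs, abs_div,
          abs_of_nonneg (Real.rpow_nonneg hsr.le ((1:ℝ)/2 + H)),
          div_le_iff₀ (Real.rpow_pos_of_pos hsr _)]
        calc |η s - η r| ≤ A₀ * (s - r) + cN * (s - r) ^ (H - δ) := h1
          _ = (A₀ * (s - r) ^ ((1:ℝ)/2 - H) + cN * (s - r) ^ (-(1:ℝ)/2 - δ))
              * (s - r) ^ ((1:ℝ)/2 + H) := by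
            have ea : (s - r) ^ ((1:ℝ)/2 - H) * (s - r) ^ ((1:ℝ)/2 + H) = s - r := by
              rw [← Real.rpow_add hsr, show (1:ℝ)/2 - H + ((1:ℝ)/2 + H) = 1 by ring,
                Real.rpow_one]
            have eb : (s - r) ^ (-(1:ℝ)/2 - δ) * (s - r) ^ ((1:ℝ)/2 + H)
                = (s - r) ^ (H - δ) := by
              rw [← Real.rpow_add hsr]
              congr 1
              ring
            conv_rhs => rw [add_mul, mul_assoc, mul_assoc, ea, eb]
    have h := intervalIntegral.norm_integral_le_abs_of_norm_le hbound hDgint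
    rw [Real.norm_eq_abs] at h
    rw [intervalIntegral.integral_add (i1.const_mul A₀) (i2.const_mul cN),
      intervalIntegral.integral_const_mul, intervalIntegral.integral_const_mul, e1, e2] at h
    rwa [abs_of_nonneg (add_nonneg
      (mul_nonneg hA₀nn (div_nonneg (Real.rpow_nonneg hs0.le _) (by linarith)))
      (mul_nonneg hcNnn (div_nonneg (Real.rpow_nonneg hs0.le _) (by linarith))))] at h
  -- assemble
  have hT1 : |s ^ ((1:ℝ)/2 - H) * η s| ≤ s ^ ((1:ℝ)/2 - H) * M := by
    rw [abs_mul, abs_of_nonneg (Real.rpow_nonneg hs0.le _)]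
    exact mul_le_mul_of_nonneg_left (hηb s hsmem) (Real.rpow_nonneg hs0.le _)
  have hT2 : |(H - 1/2) * s ^ (H - (1:ℝ)/2) * (∫ r in (0:ℝ)..s,
      (s ^ ((1:ℝ)/2 - H) - r ^ ((1:ℝ)/2 - H)) / (s - r) ^ ((1:ℝ)/2 + H) * η r)|
      ≤ (H - 1/2) * (C₀ * (M * s ^ ((1:ℝ)/2 - H))) := by
    rw [abs_mul, abs_mul, abs_of_nonneg (show (0:ℝ) ≤ H - 1/2 by linarith),
      abs_of_nonneg (Real.rpow_nonneg hs0.le _)]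
    have hcol : s ^ (H - (1:ℝ)/2) * (s * s ^ (-(2*H))) = s ^ ((1:ℝ)/2 - H) := by
      nth_rewrite 2 [← Real.rpow_one s]
      rw [← Real.rpow_add hs0, ← Real.rpow_add hs0]
      congr 1
      ring
    calc (H - 1/2) * s ^ (H - (1:ℝ)/2) * |∫ r in (0:ℝ)..s,
          (s ^ ((1:ℝ)/2 - H) - r ^ ((1:ℝ)/2 - H)) / (s - r) ^ ((1:ℝ)/2 + H) * η r|
        ≤ (H - 1/2) * s ^ (H - (1:ℝ)/2) * (M * (s * (s ^ (-(2*H)) * C₀))) := by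
          apply mul_le_mul_of_nonneg_left hI₁
          exact mul_nonneg (by linarith) (Real.rpow_nonneg hs0.le _)
      _ = (H - 1/2) * (M * C₀) * (s ^ (H - (1:ℝ)/2) * (s * s ^ (-(2*H)))) := by ring
      _ = (H - 1/2) * (C₀ * (M * s ^ ((1:ℝ)/2 - H))) := by rw [hcol]; ring
  have hT3 : |(H - 1/2) * ∫ r in (0:ℝ)..s, (η s - η r) / (s - r) ^ ((1:ℝ)/2 + H)|
      ≤ (H - 1/2) * (A₀ * (s ^ ((3:ℝ)/2 - H) / (3/2 - H))
          + cN * (s ^ ((1:ℝ)/2 - δ) / (1/2 - δ))) := by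
    rw [abs_mul, abs_of_nonneg (show (0:ℝ) ≤ H - 1/2 by linarith)]
    exact mul_le_mul_of_nonneg_left hJ (by linarith)
  have habs : |Φ s| ≤ (1 / Real.Gamma (3/2 - H)) *
      (s ^ ((1:ℝ)/2 - H) * M + (H - 1/2) * (C₀ * (M * s ^ ((1:ℝ)/2 - H)))
        + (H - 1/2) * (A₀ * (s ^ ((3:ℝ)/2 - H) / (3/2 - H))
            + cN * (s ^ ((1:ℝ)/2 - δ) / (1/2 - δ)))) := by
    rw [hΦ s ⟨hs0, hsT⟩, abs_mul, abs_of_pos (one_div_pos.mpr hΓ)]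
    refine mul_le_mul_of_nonneg_left ?_ (one_div_nonneg.mpr hΓ.le)
    refine (abs_add_three _ _ _).trans ?_
    exact add_le_add (add_le_add hT1 hT2) hT3
  refine habs.trans ?_
  have e1' : (1 / Real.Gamma (3/2 - H)) *
      (s ^ ((1:ℝ)/2 - H) * M + (H - 1/2) * (C₀ * (M * s ^ ((1:ℝ)/2 - H))))
      = C₁ * ε * s ^ ((1:ℝ)/2 - H) := by
    rw [hC₁, hMdef]; ring
  have e4' : (1 / Real.Gamma (3/2 - H)) *
      ((H - 1/2) * (cN * (s ^ ((1:ℝ)/2 - δ) / (1/2 - δ))))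
      = C₄ * ε * s ^ ((1:ℝ)/2 - δ) * N := by
    rw [hC₄, hcNdef]; ring
  have e23 : (1 / Real.Gamma (3/2 - H)) *
      ((H - 1/2) * (A₀ * (s ^ ((3:ℝ)/2 - H) / (3/2 - H))))
      ≤ C₂ * ε * s ^ ((3:ℝ)/2 - H) + C₃ * ε * s ^ ((3:ℝ)/2 - H) * W := by
    have hslack : C₂ * ε * s ^ ((3:ℝ)/2 - H) + C₃ * ε * s ^ ((3:ℝ)/2 - H) * W
        - (1 / Real.Gamma (3/2 - H)) * ((H - 1/2) * (A₀ * (s ^ ((3:ℝ)/2 - H) / (3/2 - H))))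
        = (1 / Real.Gamma (3/2 - H)) * ((H - 1/2) / (3/2 - H))
            * (K₂ * |y| * ε / T * (|y| * ε)) * s ^ ((3:ℝ)/2 - H) := by
      have hT0 : T ≠ 0 := hT.ne'
      have hTT : T * (1/T) = 1 := by rw [mul_one_div, div_self hT0]
      rw [hC₂, hC₃, hA₀def]
      linear_combination ((1/Real.Gamma (3/2 - H)) * ((H - 1/2)/(3/2 - H)) * d₁ * K₂
        * |y| * ε * s ^ ((3:ℝ)/2 - H)) * hTT
    have hnn : (0:ℝ) ≤ (1 / Real.Gamma (3/2 - H)) * ((H - 1/2) / (3/2 - H))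
        * (K₂ * |y| * ε / T * (|y| * ε)) * s ^ ((3:ℝ)/2 - H) := by
      apply mul_nonneg
      apply mul_nonneg
      apply mul_nonneg (one_div_nonneg.mpr hΓ.le)
      · exact div_nonneg (by linarith) (by linarith)
      · positivity
      · exact Real.rpow_nonneg hs0.le _
    linarith
  have esplit : (1 / Real.Gamma (3/2 - H)) *
      (s ^ ((1:ℝ)/2 - H) * M + (H - 1/2) * (C₀ * (M * s ^ ((1:ℝ)/2 - H)))
        + (H - 1/2) * (A₀ * (s ^ ((3:ℝ)/2 - H) / (3/2 - H))
            + cN * (s ^ ((1:ℝ)/2 - δ) / (1/2 - δ))))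
      = (1 / Real.Gamma (3/2 - H)) *
          (s ^ ((1:ℝ)/2 - H) * M + (H - 1/2) * (C₀ * (M * s ^ ((1:ℝ)/2 - H))))
        + (1 / Real.Gamma (3/2 - H)) * ((H - 1/2) * (A₀ * (s ^ ((3:ℝ)/2 - H) / (3/2 - H))))
        + (1 / Real.Gamma (3/2 - H)) * ((H - 1/2) * (cN * (s ^ ((1:ℝ)/2 - δ) / (1/2 - δ)))) := by
    ring
  linarith [e1', e4', e23, esplit]
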